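/- With notation as in the context, one has the identity (2A − 3u)(2A − 3v)(2A − 3w) = −16(4A³ + 27B²) in K. In particular, since 4A³ + 27B² ≠ 0, each of the three elements 2A − 3u, 2A − 3v, 2A − 3w is nonzero. -/
import Mathlib


open Polynomial

/-- With `ψ₃(X) = 3X⁴ + 6AX² + 12BX − A² = 3(X−x₁)(X−x₂)(X−x₃)(X−x₄)` over a field `K` of
characteristic different from `2` and `3`, with `4A³ + 27B² ≠ 0`, and
`u = x₁x₂ + x₃x₄`, `v = x₁x₃ + x₂x₄`, `w = x₁x₄ + x₂x₃`, one has
`(2A − 3u)(2A − 3v)(2A − 3w) = −16(4A³ + 27B²)`; in particular the three factors are nonzero. -/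
theorem stmt2 {K : Type*} [Field K] (h2 : (2 : K) ≠ 0) (h3 : (3 : K) ≠ 0)
    (A B : K) (hΔ : 4 * A ^ 3 + 27 * B ^ 2 ≠ 0) (x₁ x₂ x₃ x₄ : K)
    (hψ : C 3 * X ^ 4 + C (6 * A) * X ^ 2 + C (12 * B) * X - C (A ^ 2)
        = C 3 * (X - C x₁) * (X - C x₂) * (X - C x₃) * (X - C x₄))
    (u v w : K) (hu : u = x₁ * x₂ + x₃ * x₄) (hv : v = x₁ * x₃ + x₂ * x₄)
    (hw : w = x₁ * x₄ + x₂ * x₃) :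
    (2 * A - 3 * u) * (2 * A - 3 * v) * (2 * A - 3 * w)
        = -16 * (4 * A ^ 3 + 27 * B ^ 2) ∧
      (2 * A - 3 * u ≠ 0 ∧ 2 * A - 3 * v ≠ 0 ∧ 2 * A - 3 * w ≠ 0) := by
  subst hu hv hw
  have expand : C 3 * (X - C x₁) * (X - C x₂) * (X - C x₃) * (X - C x₄)
      = C 3 * X ^ 4 - C (3*(x₁+x₂+x₃+x₄)) * X ^ 3
        + C (3*(x₁*x₂+x₁*x₃+x₁*x₄+x₂*x₃+x₂*x₄+x₃*x₄)) * X ^ 2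
        - C (3*(x₁*x₂*x₃+x₁*x₂*x₄+x₁*x₃*x₄+x₂*x₃*x₄)) * X
        + C (3*(x₁*x₂*x₃*x₄)) := by
    simp only [map_mul, map_add]
    ring
  rw [expand] at hψ
  have h3' := congrArg (fun p => coeff p 3) hψ
  have h2' := congrArg (fun p => coeff p 2) hψ
  have h1' := congrArg (fun p => coeff p 1) hψ
  have h0' := congrArg (fun p => coeff p 0) hψ
  simp only [coeff_add, coeff_sub, coeff_C_mul, coeff_X_pow, coeff_X, coeff_C,
    coeff_neg] at h3' h2' h1' h0'
  norm_num at h3' h2' h1' h0'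
  have s1 : x₁ + x₂ + x₃ + x₄ = 0 := h3'.resolve_left h3
  have key : (2 * A - 3 * (x₁ * x₂ + x₃ * x₄)) * (2 * A - 3 * (x₁ * x₃ + x₂ * x₄)) *
      (2 * A - 3 * (x₁ * x₄ + x₂ * x₃)) = -16 * (4 * A ^ 3 + 27 * B ^ 2) := by
    linear_combination ((6)*x₃^3*x₄^2 + (27)*x₂*x₃^2*x₄^2 + (12)*x₂*x₃^3*x₄ + (27)*x₂^2*x₃*x₄^2 + (33)*x₂^2*x₃^2*x₄ + (6)*x₂^2*x₃^3 + (6)*x₂^3*x₄^2 + (12)*x₂^3*x₃*x₄ + (6)*x₂^3*x₃^2 + (27)*x₁*x₃^2*x₄^2 + (12)*x₁*x₃^3*x₄ + (36)*x₁*x₂*x₃*x₄^2 + (132)*x₁*x₂*x₃^2*x₄ + (12)*x₁*x₂*x₃^3 + (27)*x₁*x₂^2*x₄^2 + (132)*x₁*x₂^2*x₃*x₄ + (39)*x₁*x₂^2*x₃^2 + (12)*x₁*x₂^3*x₄ + (12)*x₁*x₂^3*x₃ + (27)*x₁^2*x₃*x₄^2 + (33)*x₁^2*x₃^2*x₄ +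 (6)*x₁^2*x₃^3 + (27)*x₁^2*x₂*x₄^2 + (132)*x₁^2*x₂*x₃*x₄ + (39)*x₁^2*x₂*x₃^2 + (33)*x₁^2*x₂^2*x₄ + (39)*x₁^2*x₂^2*x₃ + (6)*x₁^2*x₂^3 + (6)*x₁^3*x₄^2 + (12)*x₁^3*x₃*x₄ + (6)*x₁^3*x₃^2 + (12)*x₁^3*x₂*x₄ + (12)*x₁^3*x₂*x₃ + (6)*x₁^3*x₂^2) * s1 + ((2)*x₃^2*x₄^2 + (2)*x₃^3*x₄ + (7)*x₂*x₃*x₄^2 + (11)*x₂*x₃^2*x₄ + (2)*x₂*x₃^3 + (2)*x₂^2*x₄^2 + (11)*x₂^2*x₃*x₄ + (4)*x₂^2*x₃^2 + (2)*x₂^3*x₄ + (2)*x₂^3*x₃ + (7)*x₁*x₃*x₄^2 + (11)*x₁*x₃^2*x₄ + (2)*x₁*x₃^3 + (7)*x₁*x₂*x₄^2 + (18)*x₁*x₂*x₃*x₄ + (13)*x₁*x₂*x₃^2 + (11)*x₁*x₂^2*x₄ + (13)*x₁*x₂^2*x₃ + (2)*x₁*x₂^3 + (2)*x₁^2*x₄^2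 + (11)*x₁^2*x₃*x₄ + (4)*x₁^2*x₃^2 + (11)*x₁^2*x₂*x₄ + (13)*x₁^2*x₂*x₃ + (4)*x₁^2*x₂^2 + (2)*x₁^3*x₄ + (2)*x₁^3*x₃ + (2)*x₁^3*x₂ + (4)*A*x₃*x₄ + (4)*A*x₃^2 + (4)*A*x₂*x₄ + (8)*A*x₂*x₃ + (4)*A*x₂^2 + (4)*A*x₁*x₄ + (8)*A*x₁*x₃ + (8)*A*x₁*x₂ + (4)*A*x₁^2 + (12)*A^2) * h2' + ((-9)*x₂*x₃*x₄ + (-9)*x₁*x₃*x₄ + (-9)*x₁*x₂*x₄ + (-9)*x₁*x₂*x₃ + (36)*B) * h1' + ((24)*x₃^2 + (24)*x₂*x₃ + (24)*x₂^2 + (24)*x₁*x₃ + (24)*x₁*x₂ + (24)*x₁^2) * h0'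
  have h16 : (-16 : K) ≠ 0 := by
    have h4 : (2 : K) ^ 4 ≠ 0 := pow_ne_zero 4 h2
    intro h
    apply h4
    linear_combination -h
  have hprod : (2 * A - 3 * (x₁ * x₂ + x₃ * x₄)) * (2 * A - 3 * (x₁ * x₃ + x₂ * x₄)) *
      (2 * A - 3 * (x₁ * x₄ + x₂ * x₃)) ≠ 0 := by
    rw [key]; exact mul_ne_zero h16 hΔ
  obtain ⟨h12, hc⟩ := mul_ne_zero_iff.mp hprod
  obtain ⟨ha, hb⟩ := mul_ne_zero_iff.mp h12
  exact ⟨key, ha, hb, hc⟩
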